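/- Let H be a nonnegative self-adjoint operator, α > 1, N a natural number, and λ ≥ 0. If there exists a sequence ψₙ in the domain of H with ‖ψₙ‖ = 1 such that ⟨(H+α)^{-i}ψₙ, (H−λ)ψₙ⟩ → 0 for both i = N and i = N+1, and ⟨ψₙ, (H−λ)ψₙ⟩ → 0, then λ ∈ σ(H). -/

import Mathlib

open Filter Topology

theorem weyl_resolvent_power_criterion
    {ℋ : Type*} [NormedAddCommGroup ℋ] [InnerProductSpace ℂ ℋ] [CompleteSpace ℋ]
    (H : ℋ →L[ℂ] ℋ) (hH : IsSelfAdjoint H) (hHpos : H.IsPositive)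
    (α : ℝ) (hα : 1 < α) (N : ℕ)
    (R : ℋ →L[ℂ] ℋ) (hR1 : R * (H + (α : ℂ) • 1) = 1)
    (hR2 : (H + (α : ℂ) • 1) * R = 1)
    (lam : ℝ) (hlam_nonneg : 0 ≤ lam)
    (ψ : ℕ → ℋ) (hψ : ∀ n, ‖ψ n‖ = 1)
    (hN : Tendsto (fun n =>
        (inner ℂ ((R ^ N) (ψ n)) ((H - (lam : ℂ) • 1) (ψ n)) : ℂ)) atTop (nhds 0))
    (hN1 : Tendsto (fun n =>
        (inner ℂ ((R ^ (N + 1)) (ψ n)) ((H - (lam : ℂ) • 1) (ψ n)) : ℂ))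
        atTop (nhds 0))
    (h2 : Tendsto (fun n => (inner ℂ (ψ n) ((H - (lam : ℂ) • 1) (ψ n)) : ℂ))
        atTop (nhds 0)) :
    (lam : ℂ) ∈ spectrum ℂ H := by
  classical
  set T : ℋ →L[ℂ] ℋ := H + (α : ℂ) • 1 with hTdef
  set D : ℋ →L[ℂ] ℋ := H - (lam : ℂ) • 1 with hDdef
  have hTsa : IsSelfAdjoint T :=
    hH.add (IsSelfAdjoint.smul (Complex.conj_ofReal _) (IsSelfAdjoint.one _))
  have hDsa : IsSelfAdjoint D :=
    hH.sub (IsSelfAdjoint.smul (Complex.conj_ofReal _) (IsSelfAdjoint.one _))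
  have hRT : R * T = 1 := hR1
  have hTR : T * R = 1 := hR2
  -- R is self-adjoint
  have hstarRT : star R * T = 1 := by
    have := congrArg star hTR
    rwa [star_mul, star_one, hTsa.star_eq] at this
  have hRsa : IsSelfAdjoint R := by
    show star R = R
    calc star R = star R * (T * R) := by rw [hTR, mul_one]
    _ = (star R * T) * R := by rw [mul_assoc]
    _ = R := by rw [hstarRT, one_mul]
  -- commutation
  have hcTR : Commute T R := by
    show T * R = R * T
    rw [hRT, hTR]
  have hDT : D = T - ((lam : ℂ) + α) • 1 := by
    rw [hTdef, hDdef, add_smul]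
    abel
  have hcDR : Commute D R := by
    show D * R = R * D
    rw [hDT, sub_mul, mul_sub, hcTR.eq, smul_mul_assoc, mul_smul_comm, one_mul, mul_one]
  -- self-adjoint operators move across the inner ℂ product
  have hsa_inner : ∀ (A : ℋ →L[ℂ] ℋ), IsSelfAdjoint A → ∀ x y : ℋ,
      (inner ℂ (A x) y : ℂ) = inner ℂ x (A y) := by
    intro A hA x y
    conv_lhs => rw [← ContinuousLinearMap.isSelfAdjoint_iff'.mp hA]
    exact ContinuousLinearMap.adjoint_inner_left A y x
  -- the key operator identity
  have hopEq : R ^ N - ((lam : ℂ) + α) • R ^ (N + 1) = D * R ^ (N + 1) := by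
    have h1 : R ^ N = R ^ (N + 1) * T := by
      rw [pow_succ, mul_assoc, hRT, mul_one]
    have h2 : R ^ (N + 1) * D = R ^ (N + 1) * T - ((lam : ℂ) + α) • R ^ (N + 1) := by
      rw [hDT, mul_sub, mul_smul_comm, mul_one]
    rw [(hcDR.pow_right (N + 1)).eq, h2, ← h1]
  have hop : ∀ v : ℋ, (R ^ N) (D v) - ((lam : ℂ) + α) • (R ^ (N + 1)) (D v)
      = D ((R ^ (N + 1)) (D v)) := by
    intro v
    have := congrFun (congrArg DFunLike.coe hopEq) (D v)
    simpa [ContinuousLinearMap.sub_apply, ContinuousLinearMap.smul_apply,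
      ContinuousLinearMap.mul_apply] using this
  -- the combined sequence
  have heq : ∀ n, (inner ℂ ((R ^ N) (ψ n)) (D (ψ n)) : ℂ)
      - ((lam : ℂ) + α) * inner ℂ ((R ^ (N + 1)) (ψ n)) (D (ψ n))
      = inner ℂ (D (ψ n)) ((R ^ (N + 1)) (D (ψ n))) := by
    intro n
    rw [hsa_inner _ (hRsa.pow N), hsa_inner _ (hRsa.pow (N + 1)),
      ← inner_smul_right, ← inner_sub_right, hop, ← hsa_inner _ hDsa]
  have hf : Tendsto (fun n => (inner ℂ (D (ψ n)) ((R ^ (N + 1)) (D (ψ n))) : ℂ))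
      atTop (nhds 0) := by
    have h := hN.sub (hN1.const_mul ((lam : ℂ) + α))
    simp only [mul_zero, sub_zero] at h
    simpa only [heq] using h
  -- inverse powers
  have hTRpow : ∀ j : ℕ, T ^ j * R ^ j = 1 := by
    intro j
    rw [← hcTR.mul_pow, hTR, one_pow]
  have hnormLe : ∀ j : ℕ, 0 < j → ∀ v : ℋ, ‖v‖ ≤ ‖T‖ ^ j * ‖(R ^ j) v‖ := by
    intro j hj v
    have hv : v = (T ^ j) ((R ^ j) v) := by
      rw [← ContinuousLinearMap.mul_apply, hTRpow, ContinuousLinearMap.one_apply]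
    calc ‖v‖ = ‖(T ^ j) ((R ^ j) v)‖ := by rw [← hv]
    _ ≤ ‖T ^ j‖ * ‖(R ^ j) v‖ := ContinuousLinearMap.le_opNorm _ _
    _ ≤ ‖T‖ ^ j * ‖(R ^ j) v‖ := by
        gcongr
        exact norm_pow_le' T hj
  -- the single-resolvent positivity estimate
  have hL3' : ∀ z : ℋ, α * ‖z‖ ^ 2 ≤ Complex.re (inner ℂ (T z) z : ℂ) := by
    intro z
    have hTz : (inner ℂ (T z) z : ℂ) = inner ℂ (H z) z + (α : ℂ) * inner ℂ z z := by
      rw [hTdef]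
      simp only [ContinuousLinearMap.add_apply, ContinuousLinearMap.smul_apply,
        ContinuousLinearMap.one_apply, inner_add_left, inner_smul_left,
        Complex.conj_ofReal]
    have h1 : 0 ≤ Complex.re (inner ℂ (H z) z : ℂ) := (Complex.le_def.mp (hHpos.inner_nonneg_left z)).1
    have h2 : Complex.re ((α : ℂ) * (inner ℂ z z : ℂ)) = α * ‖z‖ ^ 2 := by
      rw [Complex.re_ofReal_mul]
      congr 1
      rw [inner_self_eq_norm_sq_to_K]
      norm_cast
    rw [hTz, Complex.add_re, h2]
    linarith
  have hL3 : ∀ w : ℋ, α * ‖R w‖ ^ 2 ≤ Complex.re (inner ℂ w (R w) : ℂ) := by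
    intro w
    have hw : w = T (R w) := by
      rw [← ContinuousLinearMap.mul_apply, hTR, ContinuousLinearMap.one_apply]
    nth_rewrite 2 [hw]
    exact hL3' (R w)
  -- lower bound for the power
  have hbound : ∃ C : ℝ, 0 ≤ C ∧ ∀ v : ℋ,
      ‖v‖ ^ 2 ≤ C * Complex.re (inner ℂ v ((R ^ (N + 1)) v) : ℂ) := by
    rcases Nat.even_or_odd (N + 1) with ⟨m, hm⟩ | ⟨m, hm⟩
    · -- N + 1 = m + m, with m ≥ 1
      have hm1 : 0 < m := by omega
      refine ⟨(‖T‖ ^ m) ^ 2, by positivity, fun v => ?_⟩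
      have hre : Complex.re (inner ℂ v ((R ^ (N + 1)) v) : ℂ) = ‖(R ^ m) v‖ ^ 2 := by
        have : (R ^ (N + 1)) v = (R ^ m) ((R ^ m) v) := by
          rw [← ContinuousLinearMap.mul_apply, ← pow_add, hm]
        rw [this, ← hsa_inner _ (hRsa.pow m), inner_self_eq_norm_sq_to_K]
        norm_cast
      rw [hre]
      have h4 := hnormLe m hm1 v
      nlinarith [mul_self_le_mul_self (norm_nonneg v) h4, norm_nonneg ((R ^ m) v),
        norm_nonneg v]
    · -- N + 1 = 2 * m + 1
      have hα0 : (0:ℝ) < α := by linarith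
      refine ⟨(‖T‖ ^ (m + 1)) ^ 2 / α, by positivity, fun v => ?_⟩
      have hsplit : (R ^ (N + 1)) v = (R ^ m) (R ((R ^ m) v)) := by
        rw [hm, show 2 * m + 1 = m + 1 + m by ring, pow_add, pow_succ]
        simp [ContinuousLinearMap.mul_apply]
      have hre : Complex.re (inner ℂ v ((R ^ (N + 1)) v) : ℂ)
          = Complex.re (inner ℂ ((R ^ m) v) (R ((R ^ m) v)) : ℂ) := by
        rw [hsplit, ← hsa_inner _ (hRsa.pow m)]
      have h3 := hL3 ((R ^ m) v)
      have h4 := hnormLe (m + 1) (by omega) v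
      have hR1v : (R ^ (m + 1)) v = R ((R ^ m) v) := by
        rw [pow_succ']
        simp [ContinuousLinearMap.mul_apply]
      rw [hR1v] at h4
      rw [hre, div_mul_eq_mul_div, le_div_iff₀ hα0]
      nlinarith [mul_self_le_mul_self (norm_nonneg v) h4, h3, hα0.le,
        norm_nonneg v, norm_nonneg (R ((R ^ m) v)), sq_nonneg (‖T‖ ^ (m + 1))]
  -- conclude ‖D ψₙ‖² → 0
  obtain ⟨C, hC0, hC⟩ := hbound
  have hDto : Tendsto (fun n => ‖D (ψ n)‖ ^ 2) atTop (nhds 0) := by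
    have hre0 : Tendsto (fun n =>
        C * Complex.re (inner ℂ (D (ψ n)) ((R ^ (N + 1)) (D (ψ n))) : ℂ))
        atTop (nhds 0) := by
      have h := (Complex.continuous_re.tendsto 0).comp hf
      simpa using h.const_mul C
    refine tendsto_of_tendsto_of_tendsto_of_le_of_le tendsto_const_nhds hre0
      (fun n => by positivity) (fun n => hC _)
  -- final contradiction with invertibility
  by_contra hcon
  rw [spectrum.notMem_iff] at hcon
  obtain ⟨u, hu⟩ := hcon
  set B : ℋ →L[ℂ] ℋ := (↑u⁻¹ : ℋ →L[ℂ] ℋ) with hB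
  have hBD : B * (algebraMap ℂ (ℋ →L[ℂ] ℋ) (lam : ℂ) - H) = 1 := by
    rw [← hu, hB]
    exact u.inv_mul
  have halg : algebraMap ℂ (ℋ →L[ℂ] ℋ) (lam : ℂ) - H = -D := by
    rw [Algebra.algebraMap_eq_smul_one, hDdef]
    abel
  have hBapp : ∀ x : ℋ, B (-(D x)) = x := by
    intro x
    have := congrFun (congrArg DFunLike.coe hBD) x
    simpa [halg, ContinuousLinearMap.mul_apply] using this
  have hkey : ∀ n, (1:ℝ) ≤ ‖B‖ ^ 2 * ‖D (ψ n)‖ ^ 2 := by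
    intro n
    have h1 : ‖ψ n‖ ≤ ‖B‖ * ‖D (ψ n)‖ := by
      calc ‖ψ n‖ = ‖B (-(D (ψ n)))‖ := by rw [hBapp]
      _ ≤ ‖B‖ * ‖-(D (ψ n))‖ := ContinuousLinearMap.le_opNorm _ _
      _ = ‖B‖ * ‖D (ψ n)‖ := by rw [norm_neg]
    have h2 : (1:ℝ) = ‖ψ n‖ := (hψ n).symm
    nlinarith [norm_nonneg (ψ n), norm_nonneg B, norm_nonneg (D (ψ n))]
  have hlim : Tendsto (fun n => ‖B‖ ^ 2 * ‖D (ψ n)‖ ^ 2) atTop (nhds 0) := by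
    simpa using hDto.const_mul (‖B‖ ^ 2)
  have : (1:ℝ) ≤ 0 := ge_of_tendsto' hlim hkey
  linarith
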